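/- arXiv:2511.11988 — 3 statements merged into one kernel-verified Lean document; each statement's English description precedes it below -/
import Mathlib

section
/- Let z ∈ ℝ have a decomposition z = Uβ + M + L/β where U, M ∈ ℤ, L ∈ ℝ, and β ≥ 2 is an integer. If |L/β| < 1/2 and |M/β + L/β²| < 1/2, then round(z) − β·round(z/β) = M, where round denotes rounding to the nearest integer. -/
lemma round_zero_of_abs_lt (y : ℝ) (h : |y| < 1/2) : round y = 0 := by
  rw [abs_lt] at h
  rw [round_eq_zero_iff]
  constructor <;> [linarith [h.1]; linarith [h.2]]

/-- Extractor Sufficiency: if `z = Uβ + M + L/β` with integer `U, M`, real `L`,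
integer base `β ≥ 2`, and the two gap conditions hold, then the two-round
extractor `round z − β · round (z/β)` returns `M` exactly. -/
theorem extractor_sufficiency (β U M : ℤ) (L : ℝ) (hβ : 2 ≤ β)
    (z : ℝ) (hz : z = (U : ℝ) * β + M + L / β)
    (h1 : |L / (β : ℝ)| < 1 / 2)
    (h2 : |(M : ℝ) / β + L / (β : ℝ) ^ 2| < 1 / 2) :
    round z - β * round (z / β) = M := by
  have hβ0 : (β : ℝ) ≠ 0 := by positivity
  have hr1 : round z = U * β + M := by
    have : z = ((U * β + M : ℤ) : ℝ) + L / β := by push_cast; linarith [hz]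
    rw [this, round_intCast_add, round_zero_of_abs_lt _ h1, add_zero]
  have hr2 : round (z / β) = U := by
    have : z / β = (U : ℝ) + ((M : ℝ) / β + L / (β : ℝ) ^ 2) := by
      rw [hz]; field_simp; ring
    rw [this, round_intCast_add, round_zero_of_abs_lt _ h2, add_zero]
  rw [hr1, hr2]; ring
end

section
/- Let M, L be integers, β ≥ 2 an integer, and U ∈ ℤ. If |M| ≤ (β−1)/2 and |L| ≤ (β−1)/4, then for z = Uβ + M + L/β we have round(z) − β·round(z/β) = M. -/
/-- Combination of integer slack with the two-round extractor: under the integer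
bounds `|M| ≤ (β−1)/2` and `|L| ≤ (β−1)/4`, the extractor applied to
`z = Uβ + M + L/β` returns `M` exactly. -/
theorem integer_slack_extractor (β U M L : ℤ) (hβ : 2 ≤ β)
    (hM : (|M| : ℝ) ≤ ((β : ℝ) - 1) / 2)
    (hL : (|L| : ℝ) ≤ ((β : ℝ) - 1) / 4)
    (z : ℝ) (hz : z = (U : ℝ) * β + M + (L : ℝ) / β) :
    round z - β * round (z / β) = M := by
  have hβR : (2 : ℝ) ≤ (β : ℝ) := by exact_mod_cast hβ
  have hβ0 : (0 : ℝ) < (β : ℝ) := by linarith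
  obtain ⟨hM1, hM2⟩ := abs_le.1 hM
  obtain ⟨hL1, hL2⟩ := abs_le.1 hL
  have h1 : round z = U * β + M := by
    have he : z = ((U * β + M : ℤ) : ℝ) + (L : ℝ) / β := by
      push_cast; linarith
    rw [he, round_intCast_add]
    have : round ((L : ℝ) / β) = 0 := by
      rw [round_eq_zero_iff]
      constructor
      · rw [le_div_iff₀ hβ0]
        nlinarith
      · rw [div_lt_iff₀ hβ0]
        nlinarith
    omega
  have h2 : round (z / β) = U := by
    have he : z / β = ((U : ℤ) : ℝ) + ((M : ℝ) * β + L) / (β * β) := by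
      rw [hz]; field_simp; ring
    rw [he, round_intCast_add]
    have : round (((M : ℝ) * β + L) / (β * β)) = 0 := by
      rw [round_eq_zero_iff]
      have hb2 : (0 : ℝ) < β * β := by positivity
      constructor
      · rw [le_div_iff₀ hb2]
        nlinarith
      · rw [div_lt_iff₀ hb2]
        nlinarith
    omega
  rw [h1, h2]; ring
end

section
/- Let β ≥ 2 be an integer and suppose for each depth ℓ the values M_ℓ, L_ℓ ∈ ℤ and U_ℓ ∈ ℤ satisfy |M_ℓ| ≤ 2S_ℓ and |L_ℓ| ≤ S_ℓ with S_ℓ = (n/2^{ℓ+1})·B² and β ≥ 4·(n/2)·B² + 1. Then for every ℓ, mid_β(U_ℓ β + M_ℓ + L_ℓ/β) = M_ℓ. -/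
lemma round_eq_zero_of_abs_lt {x : ℝ} (h : |x| < 1/2) : round x = 0 := by
  rw [round_eq_zero_iff]
  rcases abs_lt.mp h with ⟨h1, h2⟩
  constructor <;> [linarith; linarith]

/-- Global gap sufficiency for the extractor: with `S_ℓ = (n/2^{ℓ+1})B²` and a
single global base `β ≥ 4·(n/2)·B² + 1`, depth-ℓ values `z = U_ℓ β + M_ℓ + L_ℓ/β`
with `|M_ℓ| ≤ 2S_ℓ` and `|L_ℓ| ≤ S_ℓ` are extracted exactly at every depth. -/
theorem global_gap_extractor (n B : ℕ) (hn : ∃ k, n = 2 ^ k) (hB : 1 ≤ B)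
    (β : ℤ) (hβ2 : 2 ≤ β)
    (hβ : 4 * ((n : ℝ) / 2 * (B : ℝ) ^ 2) + 1 ≤ (β : ℝ))
    (U M L : ℕ → ℤ)
    (hM : ∀ ℓ, |(M ℓ : ℝ)| ≤ 2 * ((n : ℝ) / 2 ^ (ℓ + 1) * (B : ℝ) ^ 2))
    (hL : ∀ ℓ, |(L ℓ : ℝ)| ≤ (n : ℝ) / 2 ^ (ℓ + 1) * (B : ℝ) ^ 2) :
    ∀ ℓ,
      round ((U ℓ : ℝ) * β + (M ℓ : ℝ) + (L ℓ : ℝ) / β) -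
        β * round (((U ℓ : ℝ) * β + (M ℓ : ℝ) + (L ℓ : ℝ) / β) / β) = M ℓ := by
  intro ℓ
  have hβR : (0:ℝ) < β := by
    have : (2:ℝ) ≤ (β:ℝ) := by exact_mod_cast hβ2
    linarith
  set S : ℝ := (n : ℝ) / 2 * (B : ℝ) ^ 2 with hSdef
  have hS0 : 0 ≤ S := by positivity
  have h2pow : (2:ℝ) ≤ 2 ^ (ℓ + 1) := by
    calc (2:ℝ) = 2 ^ 1 := (pow_one 2).symm
    _ ≤ 2 ^ (ℓ + 1) := pow_le_pow_right₀ one_le_two (by omega)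
  have hSl : (n : ℝ) / 2 ^ (ℓ + 1) * (B : ℝ) ^ 2 ≤ S := by
    rw [hSdef]
    gcongr
  have hM' : |(M ℓ : ℝ)| ≤ 2 * S := (hM ℓ).trans (by linarith)
  have hL' : |(L ℓ : ℝ)| ≤ S := (hL ℓ).trans hSl
  have h2S : 2 * S < (β:ℝ) := by linarith
  have hLb : |(L ℓ : ℝ) / β| < 1/2 := by
    rw [abs_div, abs_of_pos hβR, div_lt_iff₀ hβR]
    linarith
  have hr1 : round ((L ℓ : ℝ) / β) = 0 := round_eq_zero_of_abs_lt hLb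
  have e1 : (U ℓ : ℝ) * β + (M ℓ : ℝ) + (L ℓ : ℝ) / β
      = (L ℓ : ℝ) / β + ((U ℓ * β + M ℓ : ℤ) : ℝ) := by push_cast; ring
  have habs : |(M ℓ : ℝ) + (L ℓ : ℝ) / β| < (β:ℝ) / 2 := by
    have h1 := abs_add_le (M ℓ : ℝ) ((L ℓ : ℝ) / β)
    linarith
  have hmid : |((M ℓ : ℝ) + (L ℓ : ℝ) / β) / β| < 1/2 := by
    rw [abs_div, abs_of_pos hβR, div_lt_iff₀ hβR]
    linarith
  have hr2 : round (((M ℓ : ℝ) + (L ℓ : ℝ) / β) / β) = 0 :=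
    round_eq_zero_of_abs_lt hmid
  have e2 : ((U ℓ : ℝ) * β + (M ℓ : ℝ) + (L ℓ : ℝ) / β) / β
      = ((M ℓ : ℝ) + (L ℓ : ℝ) / β) / β + ((U ℓ : ℤ) : ℝ) := by
    field_simp
    ring
  rw [e2, round_add_intCast, hr2, zero_add]
  rw [e1, round_add_intCast, hr1, zero_add]
  push_cast
  ring
end
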